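/- Let Y_full, Y'_full be block matrices with blocks (A, B; C, D) and (A', B'; C', D') respectively, with D, D' invertible, and write ΔA = A - A', etc. To first order in the perturbations, the Schur complements K = A - B D⁻¹ C and K' = A' - B' D'⁻¹ C' satisfy ‖K - K'‖_F ≤ (1 + ‖B‖_op ‖D⁻¹‖_op)·(1 + ‖D⁻¹‖_op ‖C‖_op) · ‖Y_full - Y'_full‖_F + o(‖Y_full - Y'_full‖_F), and in particular ‖K - K'‖_F ≤ (1 + 2‖B‖_op‖D⁻¹‖_op + ‖B‖²_op‖D⁻¹‖²_op)·‖Y_full - Y'_full‖_F to leading order when ‖B‖_op = ‖C‖_op. -/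

import Mathlib

open Matrix

/-- The Frobenius norm of a complex matrix. -/
noncomputable def frobNorm {m n : Type*} [Fintype m] [Fintype n]
    (A : Matrix m n ℂ) : ℝ :=
  Real.sqrt (∑ i, ∑ j, ‖A i j‖ ^ 2)

/-- The ℓ2 operator norm of a (possibly rectangular) complex matrix. -/
noncomputable def opNormRect {m n : Type*} [Fintype m] [Fintype n] [DecidableEq n]
    (A : Matrix m n ℂ) : ℝ :=
  ‖LinearMap.toContinuousLinearMap (Matrix.toEuclideanLin A)‖

/-- The Schur complement (Kron reduction) of a block matrix with respect to its
lower-right block. -/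
noncomputable def schurC {p q : ℕ}
    (M : Matrix (Fin p ⊕ Fin q) (Fin p ⊕ Fin q) ℂ) : Matrix (Fin p) (Fin p) ℂ :=
  M.toBlocks₁₁ - M.toBlocks₁₂ * (M.toBlocks₂₂)⁻¹ * M.toBlocks₂₁

namespace KronAux

set_option linter.unusedSectionVars false
set_option linter.unusedVariables false

variable {l m n k : Type*} [Fintype l] [Fintype m] [Fintype n] [Fintype k]

lemma frobNorm_nonneg (A : Matrix m n ℂ) : 0 ≤ frobNorm A := Real.sqrt_nonneg _

section frobInstance
attribute [local instance] Matrix.frobeniusSeminormedAddCommGroup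

lemma frobNorm_eq_norm (A : Matrix m n ℂ) : frobNorm A = ‖A‖ := by
  rw [Matrix.frobenius_norm_def, frobNorm, Real.sqrt_eq_rpow]
  norm_num [Real.rpow_natCast]

lemma frobNorm_mul_le (A : Matrix m n ℂ) (B : Matrix n k ℂ) :
    frobNorm (A * B) ≤ frobNorm A * frobNorm B := by
  rw [frobNorm_eq_norm, frobNorm_eq_norm, frobNorm_eq_norm]
  exact Matrix.frobenius_norm_mul A B

lemma frobNorm_add_le (A B : Matrix m n ℂ) :
    frobNorm (A + B) ≤ frobNorm A + frobNorm B := by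
  simp only [frobNorm_eq_norm]; exact norm_add_le _ _

lemma frobNorm_sub_le (A B : Matrix m n ℂ) :
    frobNorm (A - B) ≤ frobNorm A + frobNorm B := by
  simp only [frobNorm_eq_norm]; exact norm_sub_le _ _

lemma frobNorm_neg (A : Matrix m n ℂ) : frobNorm (-A) = frobNorm A := by
  simp only [frobNorm_eq_norm]; exact norm_neg _

lemma frobNorm_conjTranspose (A : Matrix m n ℂ) : frobNorm Aᴴ = frobNorm A := by
  simp only [frobNorm_eq_norm]; exact Matrix.frobenius_norm_conjTranspose A

lemma frobNorm_zero : frobNorm (0 : Matrix m n ℂ) = 0 := by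
  simp [frobNorm]

end frobInstance

section opInstance
attribute [local instance] Matrix.instL2OpMetricSpace Matrix.instL2OpNormedAddCommGroup
variable [DecidableEq m] [DecidableEq n] [DecidableEq k]

lemma opNormRect_eq_norm (A : Matrix m n ℂ) : opNormRect A = ‖A‖ := rfl

lemma opNormRect_nonneg (A : Matrix m n ℂ) : 0 ≤ opNormRect A := by
  rw [opNormRect_eq_norm]; exact norm_nonneg _

lemma opNormRect_conjTranspose (A : Matrix m n ℂ) : opNormRect Aᴴ = opNormRect A := by
  rw [opNormRect_eq_norm, opNormRect_eq_norm]; exact Matrix.l2_opNorm_conjTranspose A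

lemma opNormRect_mul_le (A : Matrix m n ℂ) (B : Matrix n k ℂ) :
    opNormRect (A * B) ≤ opNormRect A * opNormRect B := by
  simp only [opNormRect_eq_norm]; exact Matrix.l2_opNorm_mul A B

end opInstance

lemma opNormRect_nonneg' [DecidableEq n] (A : Matrix m n ℂ) : 0 ≤ opNormRect A :=
  norm_nonneg _

lemma sq_frobNorm (A : Matrix m n ℂ) : frobNorm A ^ 2 = ∑ i, ∑ j, ‖A i j‖ ^ 2 := by
  rw [frobNorm, Real.sq_sqrt]
  positivity

lemma frobNorm_op_mul_le [DecidableEq n] (A : Matrix m n ℂ) (X : Matrix n k ℂ) :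
    frobNorm (A * X) ≤ opNormRect A * frobNorm X := by
  have hop : 0 ≤ opNormRect A := opNormRect_nonneg' A
  have hsq : frobNorm (A * X) ^ 2 ≤ (opNormRect A * frobNorm X) ^ 2 := by
    rw [sq_frobNorm, mul_pow, sq_frobNorm, Finset.sum_comm]
    have colbd : ∀ j : k, (∑ i, ‖(A * X) i j‖ ^ 2) ≤
        opNormRect A ^ 2 * ∑ i, ‖X i j‖ ^ 2 := by
      intro j
      set v : EuclideanSpace ℂ n := (WithLp.equiv 2 (n → ℂ)).symm (fun i => X i j) with hv
      have h1 : ‖LinearMap.toContinuousLinearMap (Matrix.toEuclideanLin A) v‖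
          ≤ opNormRect A * ‖v‖ := (LinearMap.toContinuousLinearMap _).le_opNorm v
      have h2 : LinearMap.toContinuousLinearMap (Matrix.toEuclideanLin A) v
          = (WithLp.equiv 2 (m → ℂ)).symm (A *ᵥ fun i => X i j) := by
        rw [hv]
        exact Matrix.toEuclideanLin_apply_piLp_toLp A _
      have hnv : ‖v‖ ^ 2 = ∑ i, ‖X i j‖ ^ 2 := by
        rw [EuclideanSpace.norm_eq, Real.sq_sqrt (by positivity)]
        rfl
      have hnu : ‖LinearMap.toContinuousLinearMap (Matrix.toEuclideanLin A) v‖ ^ 2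
          = ∑ i, ‖(A * X) i j‖ ^ 2 := by
        rw [h2, EuclideanSpace.norm_eq, Real.sq_sqrt (by positivity)]
        refine Finset.sum_congr rfl fun i _ => ?_
        congr 2
      calc (∑ i, ‖(A * X) i j‖ ^ 2)
          = ‖LinearMap.toContinuousLinearMap (Matrix.toEuclideanLin A) v‖ ^ 2 := hnu.symm
        _ ≤ (opNormRect A * ‖v‖) ^ 2 := by
            have := norm_nonneg (LinearMap.toContinuousLinearMap (Matrix.toEuclideanLin A) v)
            nlinarith [norm_nonneg v]
        _ = opNormRect A ^ 2 * ∑ i, ‖X i j‖ ^ 2 := by rw [mul_pow, hnv]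
    calc (∑ j, ∑ i, ‖(A * X) i j‖ ^ 2)
        ≤ ∑ j, opNormRect A ^ 2 * ∑ i, ‖X i j‖ ^ 2 :=
          Finset.sum_le_sum fun j _ => colbd j
      _ = opNormRect A ^ 2 * ∑ i, ∑ j, ‖X i j‖ ^ 2 := by
          rw [← Finset.mul_sum, Finset.sum_comm]
  exact (pow_le_pow_iff_left₀ (frobNorm_nonneg _) (mul_nonneg hop (frobNorm_nonneg _))
    two_ne_zero).mp hsq

lemma frobNorm_mul_op_le [DecidableEq m] [DecidableEq n] (X : Matrix k m ℂ) (A : Matrix m n ℂ) :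
    frobNorm (X * A) ≤ frobNorm X * opNormRect A := by
  calc frobNorm (X * A) = frobNorm ((X * A)ᴴ) := (frobNorm_conjTranspose _).symm
    _ = frobNorm (Aᴴ * Xᴴ) := by rw [Matrix.conjTranspose_mul]
    _ ≤ opNormRect Aᴴ * frobNorm Xᴴ := frobNorm_op_mul_le _ _
    _ = frobNorm X * opNormRect A := by
        rw [opNormRect_conjTranspose, frobNorm_conjTranspose]; ring

lemma frob_toBlocks₁₁_le (M : Matrix (m ⊕ l) (n ⊕ k) ℂ) :
    frobNorm M.toBlocks₁₁ ≤ frobNorm M := by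
  apply Real.sqrt_le_sqrt
  rw [Fintype.sum_sum_type]
  refine le_add_of_le_of_nonneg (Finset.sum_le_sum fun i _ => ?_) (by positivity)
  rw [Fintype.sum_sum_type]
  exact le_add_of_le_of_nonneg (le_of_eq rfl) (by positivity)

lemma frob_toBlocks₁₂_le (M : Matrix (m ⊕ l) (n ⊕ k) ℂ) :
    frobNorm M.toBlocks₁₂ ≤ frobNorm M := by
  apply Real.sqrt_le_sqrt
  rw [Fintype.sum_sum_type]
  refine le_add_of_le_of_nonneg (Finset.sum_le_sum fun i _ => ?_) (by positivity)
  rw [Fintype.sum_sum_type]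
  exact le_add_of_nonneg_of_le (by positivity) (le_of_eq rfl)

lemma frob_toBlocks₂₁_le (M : Matrix (m ⊕ l) (n ⊕ k) ℂ) :
    frobNorm M.toBlocks₂₁ ≤ frobNorm M := by
  apply Real.sqrt_le_sqrt
  rw [Fintype.sum_sum_type]
  refine le_add_of_nonneg_of_le (by positivity) (Finset.sum_le_sum fun i _ => ?_)
  rw [Fintype.sum_sum_type]
  exact le_add_of_le_of_nonneg (le_of_eq rfl) (by positivity)

lemma frob_toBlocks₂₂_le (M : Matrix (m ⊕ l) (n ⊕ k) ℂ) :
    frobNorm M.toBlocks₂₂ ≤ frobNorm M := by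
  apply Real.sqrt_le_sqrt
  rw [Fintype.sum_sum_type]
  refine le_add_of_nonneg_of_le (by positivity) (Finset.sum_le_sum fun i _ => ?_)
  rw [Fintype.sum_sum_type]
  exact le_add_of_nonneg_of_le (by positivity) (le_of_eq rfl)

lemma toBlocks₁₁_add (M N : Matrix (m ⊕ l) (n ⊕ k) ℂ) :
    (M + N).toBlocks₁₁ = M.toBlocks₁₁ + N.toBlocks₁₁ := rfl
lemma toBlocks₁₂_add (M N : Matrix (m ⊕ l) (n ⊕ k) ℂ) :
    (M + N).toBlocks₁₂ = M.toBlocks₁₂ + N.toBlocks₁₂ := rfl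
lemma toBlocks₂₁_add (M N : Matrix (m ⊕ l) (n ⊕ k) ℂ) :
    (M + N).toBlocks₂₁ = M.toBlocks₂₁ + N.toBlocks₂₁ := rfl
lemma toBlocks₂₂_add (M N : Matrix (m ⊕ l) (n ⊕ k) ℂ) :
    (M + N).toBlocks₂₂ = M.toBlocks₂₂ + N.toBlocks₂₂ := rfl
lemma toBlocks₂₂_zero : (0 : Matrix (m ⊕ l) (n ⊕ k) ℂ).toBlocks₂₂ = 0 := rfl
lemma toBlocks₂₁_zero : (0 : Matrix (m ⊕ l) (n ⊕ k) ℂ).toBlocks₂₁ = 0 := rfl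

lemma continuous_frobNorm : Continuous (frobNorm : Matrix m n ℂ → ℝ) :=
  Real.continuous_sqrt.comp <| continuous_finset_sum _ fun i _ =>
    continuous_finset_sum _ fun j _ => ((continuous_apply j).comp (continuous_apply i)).norm.pow 2

lemma continuous_toBlocks₂₂ :
    Continuous (fun M : Matrix (m ⊕ l) (n ⊕ k) ℂ => M.toBlocks₂₂) :=
  continuous_matrix fun i j => continuous_id.matrix_elem _ _

lemma continuous_toBlocks₂₁ :
    Continuous (fun M : Matrix (m ⊕ l) (n ⊕ k) ℂ => M.toBlocks₂₁) :=
  continuous_matrix fun i j => continuous_id.matrix_elem _ _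

lemma remainder_identity' {p q : ℕ} (A ΔA : Matrix (Fin p) (Fin p) ℂ)
    (B ΔB : Matrix (Fin p) (Fin q) ℂ) (C ΔC : Matrix (Fin q) (Fin p) ℂ)
    (D ΔD Di Di' : Matrix (Fin q) (Fin q) ℂ)
    (h1 : (D + ΔD) * Di' = 1) (h4 : Di * D = 1) :
    ((A + ΔA) - (B + ΔB) * Di' * (C + ΔC)) - (A - B * Di * C)
      - (ΔA - ΔB * (Di * C) - B * (Di * ΔC) + B * (Di * (ΔD * (Di * C))))
    = -(ΔB * (Di' * (C + ΔC) - Di * C))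
      - B * ((Di' - Di) * ΔC)
      - B * (Di * (ΔD * ((Di - Di') * C))) := by
  have hE : Di - Di' = Di * (ΔD * Di') := by
    calc Di - Di' = Di * ((D + ΔD) * Di') - (Di * D) * Di' := by
          rw [h1, h4, mul_one, one_mul]
      _ = Di * (ΔD * Di') := by
          simp only [Matrix.mul_add, Matrix.add_mul, Matrix.mul_sub, Matrix.sub_mul,
            Matrix.mul_assoc]
          try abel
  have h5 : B * (Di * C) - B * (Di' * C) - B * (Di * (ΔD * (Di' * C))) = 0 := by
    calc B * (Di * C) - B * (Di' * C) - B * (Di * (ΔD * (Di' * C)))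
        = B * ((Di - Di') * C) - B * ((Di * (ΔD * Di')) * C) := by
          simp only [Matrix.mul_add, Matrix.add_mul, Matrix.mul_sub, Matrix.sub_mul,
            Matrix.mul_assoc]
          try abel
      _ = 0 := by rw [hE, sub_self]
  calc ((A + ΔA) - (B + ΔB) * Di' * (C + ΔC)) - (A - B * Di * C)
      - (ΔA - ΔB * (Di * C) - B * (Di * ΔC) + B * (Di * (ΔD * (Di * C))))
      = (-(ΔB * (Di' * (C + ΔC) - Di * C))
        - B * ((Di' - Di) * ΔC)
        - B * (Di * (ΔD * ((Di - Di') * C))))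
        + (B * (Di * C) - B * (Di' * C) - B * (Di * (ΔD * (Di' * C)))) := by
          simp only [Matrix.mul_add, Matrix.add_mul, Matrix.mul_sub, Matrix.sub_mul,
            Matrix.mul_assoc]
          try abel
    _ = _ := by rw [h5, add_zero]

lemma remainder_identity {p q : ℕ} (A ΔA : Matrix (Fin p) (Fin p) ℂ)
    (B ΔB : Matrix (Fin p) (Fin q) ℂ) (C ΔC : Matrix (Fin q) (Fin p) ℂ)
    (D ΔD : Matrix (Fin q) (Fin q) ℂ) (hD : IsUnit D.det) (hu : IsUnit (D + ΔD).det) :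
    ((A + ΔA) - (B + ΔB) * (D + ΔD)⁻¹ * (C + ΔC)) - (A - B * D⁻¹ * C)
      - (ΔA - ΔB * (D⁻¹ * C) - B * (D⁻¹ * ΔC) + B * (D⁻¹ * (ΔD * (D⁻¹ * C))))
    = -(ΔB * ((D + ΔD)⁻¹ * (C + ΔC) - D⁻¹ * C))
      - B * (((D + ΔD)⁻¹ - D⁻¹) * ΔC)
      - B * (D⁻¹ * (ΔD * ((D⁻¹ - (D + ΔD)⁻¹) * C))) :=
  remainder_identity' A ΔA B ΔB C ΔC D ΔD D⁻¹ (D + ΔD)⁻¹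
    (Matrix.mul_nonsing_inv _ hu) (Matrix.nonsing_inv_mul _ hD)

end KronAux

open KronAux Filter Asymptotics

section MainAux

variable {p q : ℕ}

/-- Auxiliary: the nonlinear part of the inverse-times-C map. -/
noncomputable def gfun (Yf Δ : Matrix (Fin p ⊕ Fin q) (Fin p ⊕ Fin q) ℂ) :
    Matrix (Fin q) (Fin p) ℂ :=
  (Yf.toBlocks₂₂ + Δ.toBlocks₂₂)⁻¹ * (Yf.toBlocks₂₁ + Δ.toBlocks₂₁)
    - (Yf.toBlocks₂₂)⁻¹ * Yf.toBlocks₂₁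

/-- Auxiliary: difference of inverses. -/
noncomputable def Efun (Yf Δ : Matrix (Fin p ⊕ Fin q) (Fin p ⊕ Fin q) ℂ) :
    Matrix (Fin q) (Fin q) ℂ :=
  (Yf.toBlocks₂₂)⁻¹ - (Yf.toBlocks₂₂ + Δ.toBlocks₂₂)⁻¹

/-- Auxiliary: the modulus of continuity controlling the remainder. -/
noncomputable def epsfun (Yf Δ : Matrix (Fin p ⊕ Fin q) (Fin p ⊕ Fin q) ℂ) : ℝ :=
  frobNorm (gfun Yf Δ) + frobNorm Yf.toBlocks₁₂ * frobNorm (Efun Yf Δ)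
    + frobNorm Yf.toBlocks₁₂ * (frobNorm (Yf.toBlocks₂₂)⁻¹
        * (frobNorm (Efun Yf Δ) * frobNorm Yf.toBlocks₂₁))

/-- Auxiliary: the first-order (differential) approximation of the Schur complement change. -/
noncomputable def Lfun (Yf Δ : Matrix (Fin p ⊕ Fin q) (Fin p ⊕ Fin q) ℂ) :
    Matrix (Fin p) (Fin p) ℂ :=
  Δ.toBlocks₁₁ - Δ.toBlocks₁₂ * ((Yf.toBlocks₂₂)⁻¹ * Yf.toBlocks₂₁)
    - Yf.toBlocks₁₂ * ((Yf.toBlocks₂₂)⁻¹ * Δ.toBlocks₂₁)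
    + Yf.toBlocks₁₂ * ((Yf.toBlocks₂₂)⁻¹ * (Δ.toBlocks₂₂ * ((Yf.toBlocks₂₂)⁻¹ * Yf.toBlocks₂₁)))

variable (Yf : Matrix (Fin p ⊕ Fin q) (Fin p ⊕ Fin q) ℂ)

lemma inv_tendsto (hD : IsUnit (Yf.toBlocks₂₂).det) :
    Filter.Tendsto (fun Δ : Matrix (Fin p ⊕ Fin q) (Fin p ⊕ Fin q) ℂ =>
      (Yf.toBlocks₂₂ + Δ.toBlocks₂₂)⁻¹) (nhds 0) (nhds (Yf.toBlocks₂₂)⁻¹) := by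
  have hDdet : (Yf.toBlocks₂₂).det ≠ 0 := by
    simpa [isUnit_iff_ne_zero] using hD
  have hFt : Filter.Tendsto (fun Δ : Matrix (Fin p ⊕ Fin q) (Fin p ⊕ Fin q) ℂ =>
      Yf.toBlocks₂₂ + Δ.toBlocks₂₂) (nhds 0) (nhds Yf.toBlocks₂₂) := by
    have hc : Continuous (fun Δ : Matrix (Fin p ⊕ Fin q) (Fin p ⊕ Fin q) ℂ =>
        Yf.toBlocks₂₂ + Δ.toBlocks₂₂) := continuous_const.add continuous_toBlocks₂₂
    have h := hc.tendsto (0 : Matrix (Fin p ⊕ Fin q) (Fin p ⊕ Fin q) ℂ)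
    simpa [toBlocks₂₂_zero] using h
  have hI : ContinuousAt Inv.inv Yf.toBlocks₂₂ := by
    refine continuousAt_matrix_inv _ ?_
    have hre : (Ring.inverse : ℂ → ℂ) = Inv.inv := by
      funext x; exact Ring.inverse_eq_inv x
    rw [hre]
    exact continuousAt_inv₀ hDdet
  exact hI.tendsto.comp hFt

lemma eventually_unit (hD : IsUnit (Yf.toBlocks₂₂).det) :
    ∀ᶠ Δ : Matrix (Fin p ⊕ Fin q) (Fin p ⊕ Fin q) ℂ in nhds 0,
      IsUnit (Yf.toBlocks₂₂ + Δ.toBlocks₂₂).det := by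
  have hDdet : (Yf.toBlocks₂₂).det ≠ 0 := by
    simpa [isUnit_iff_ne_zero] using hD
  have hc : ContinuousAt (fun Δ : Matrix (Fin p ⊕ Fin q) (Fin p ⊕ Fin q) ℂ =>
      (Yf.toBlocks₂₂ + Δ.toBlocks₂₂).det) 0 :=
    ((continuous_const.add continuous_toBlocks₂₂).matrix_det).continuousAt
  have hne : (fun Δ : Matrix (Fin p ⊕ Fin q) (Fin p ⊕ Fin q) ℂ =>
      (Yf.toBlocks₂₂ + Δ.toBlocks₂₂).det) 0 ≠ 0 := by
    simpa [toBlocks₂₂_zero] using hDdet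
  exact (hc.eventually_ne hne).mono fun Δ h => isUnit_iff_ne_zero.mpr h

lemma eps_tendsto (hD : IsUnit (Yf.toBlocks₂₂).det) :
    Filter.Tendsto (epsfun Yf) (nhds 0) (nhds 0) := by
  have hinv := inv_tendsto Yf hD
  have hE : Filter.Tendsto (Efun Yf) (nhds 0) (nhds 0) := by
    have h := (tendsto_const_nhds
      (x := (Yf.toBlocks₂₂)⁻¹)
      (f := nhds (0 : Matrix (Fin p ⊕ Fin q) (Fin p ⊕ Fin q) ℂ))).sub hinv
    rw [sub_self] at h
    exact h
  have hfE : Filter.Tendsto (fun Δ => frobNorm (Efun Yf Δ)) (nhds 0) (nhds 0) := by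
    have h := (continuous_frobNorm.tendsto (0 : Matrix (Fin q) (Fin q) ℂ)).comp hE
    rw [frobNorm_zero] at h
    exact h
  have htC : Filter.Tendsto (fun Δ : Matrix (Fin p ⊕ Fin q) (Fin p ⊕ Fin q) ℂ =>
      frobNorm (Yf.toBlocks₂₁ + Δ.toBlocks₂₁)) (nhds 0) (nhds (frobNorm Yf.toBlocks₂₁)) := by
    have hc : Continuous (fun Δ : Matrix (Fin p ⊕ Fin q) (Fin p ⊕ Fin q) ℂ =>
        frobNorm (Yf.toBlocks₂₁ + Δ.toBlocks₂₁)) :=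
      continuous_frobNorm.comp (continuous_const.add continuous_toBlocks₂₁)
    have h := hc.tendsto (0 : Matrix (Fin p ⊕ Fin q) (Fin p ⊕ Fin q) ℂ)
    simpa [toBlocks₂₁_zero] using h
  have htD : Filter.Tendsto (fun Δ : Matrix (Fin p ⊕ Fin q) (Fin p ⊕ Fin q) ℂ =>
      frobNorm Δ.toBlocks₂₁) (nhds 0) (nhds 0) := by
    have hc : Continuous (fun Δ : Matrix (Fin p ⊕ Fin q) (Fin p ⊕ Fin q) ℂ =>
        frobNorm Δ.toBlocks₂₁) := continuous_frobNorm.comp continuous_toBlocks₂₁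
    have h := hc.tendsto (0 : Matrix (Fin p ⊕ Fin q) (Fin p ⊕ Fin q) ℂ)
    simpa [toBlocks₂₁_zero, frobNorm_zero] using h
  have hgle : ∀ Δ : Matrix (Fin p ⊕ Fin q) (Fin p ⊕ Fin q) ℂ,
      frobNorm (gfun Yf Δ) ≤ frobNorm (Efun Yf Δ) * frobNorm (Yf.toBlocks₂₁ + Δ.toBlocks₂₁)
        + frobNorm (Yf.toBlocks₂₂)⁻¹ * frobNorm Δ.toBlocks₂₁ := by
    intro Δ
    have hid : gfun Yf Δ = -(Efun Yf Δ) * (Yf.toBlocks₂₁ + Δ.toBlocks₂₁)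
        + (Yf.toBlocks₂₂)⁻¹ * Δ.toBlocks₂₁ := by
      unfold gfun Efun
      simp only [Matrix.mul_add, Matrix.add_mul, Matrix.mul_sub, Matrix.sub_mul, Matrix.neg_mul,
        neg_sub]
      abel
    rw [hid]
    refine le_trans (frobNorm_add_le _ _) (add_le_add ?_ (frobNorm_mul_le _ _))
    refine le_trans (frobNorm_mul_le _ _) ?_
    rw [frobNorm_neg]
  have hfg : Filter.Tendsto (fun Δ => frobNorm (gfun Yf Δ)) (nhds 0) (nhds 0) := by
    refine squeeze_zero (fun Δ => frobNorm_nonneg _) hgle ?_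
    have h := (hfE.mul htC).add ((tendsto_const_nhds
      (x := frobNorm (Yf.toBlocks₂₂)⁻¹)
      (f := nhds (0 : Matrix (Fin p ⊕ Fin q) (Fin p ⊕ Fin q) ℂ))).mul htD)
    rw [show (0:ℝ) = 0 * frobNorm Yf.toBlocks₂₁ + frobNorm (Yf.toBlocks₂₂)⁻¹ * 0 by ring]
    exact h
  have h := (hfg.add ((tendsto_const_nhds (x := frobNorm Yf.toBlocks₁₂)
      (f := nhds (0 : Matrix (Fin p ⊕ Fin q) (Fin p ⊕ Fin q) ℂ))).mul hfE)).add
    ((tendsto_const_nhds (x := frobNorm Yf.toBlocks₁₂)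
      (f := nhds (0 : Matrix (Fin p ⊕ Fin q) (Fin p ⊕ Fin q) ℂ))).mul
      ((tendsto_const_nhds (x := frobNorm (Yf.toBlocks₂₂)⁻¹)
        (f := nhds (0 : Matrix (Fin p ⊕ Fin q) (Fin p ⊕ Fin q) ℂ))).mul
        (hfE.mul (tendsto_const_nhds (x := frobNorm Yf.toBlocks₂₁)
          (f := nhds (0 : Matrix (Fin p ⊕ Fin q) (Fin p ⊕ Fin q) ℂ))))))
  unfold epsfun
  rw [show (0:ℝ) = 0 + frobNorm Yf.toBlocks₁₂ * 0
    + frobNorm Yf.toBlocks₁₂ * (frobNorm (Yf.toBlocks₂₂)⁻¹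
        * (0 * frobNorm Yf.toBlocks₂₁)) by ring]
  exact h

lemma rem_bound (hD : IsUnit (Yf.toBlocks₂₂).det) :
    ∀ᶠ Δ : Matrix (Fin p ⊕ Fin q) (Fin p ⊕ Fin q) ℂ in nhds 0,
      frobNorm (schurC (Yf + Δ) - schurC Yf - Lfun Yf Δ) ≤ frobNorm Δ * epsfun Yf Δ := by
  filter_upwards [eventually_unit Yf hD] with Δ hu
  have hrw : schurC (Yf + Δ) - schurC Yf - Lfun Yf Δ
      = -(Δ.toBlocks₁₂ * gfun Yf Δ)
        - Yf.toBlocks₁₂ * (((Yf.toBlocks₂₂ + Δ.toBlocks₂₂)⁻¹ - (Yf.toBlocks₂₂)⁻¹)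
            * Δ.toBlocks₂₁)
        - Yf.toBlocks₁₂ * ((Yf.toBlocks₂₂)⁻¹ * (Δ.toBlocks₂₂ * (Efun Yf Δ * Yf.toBlocks₂₁))) := by
    have h1 : schurC (Yf + Δ)
        = (Yf.toBlocks₁₁ + Δ.toBlocks₁₁)
          - (Yf.toBlocks₁₂ + Δ.toBlocks₁₂) * (Yf.toBlocks₂₂ + Δ.toBlocks₂₂)⁻¹
            * (Yf.toBlocks₂₁ + Δ.toBlocks₂₁) := by
      simp only [schurC, toBlocks₁₁_add, toBlocks₁₂_add, toBlocks₂₁_add, toBlocks₂₂_add]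
    have h2 : schurC Yf
        = Yf.toBlocks₁₁ - Yf.toBlocks₁₂ * (Yf.toBlocks₂₂)⁻¹ * Yf.toBlocks₂₁ := rfl
    rw [h1, h2]
    unfold Lfun gfun Efun
    exact remainder_identity Yf.toBlocks₁₁ Δ.toBlocks₁₁ Yf.toBlocks₁₂ Δ.toBlocks₁₂
      Yf.toBlocks₂₁ Δ.toBlocks₂₁ Yf.toBlocks₂₂ Δ.toBlocks₂₂ hD hu
  rw [hrw]
  have hnegE : (Yf.toBlocks₂₂ + Δ.toBlocks₂₂)⁻¹ - (Yf.toBlocks₂₂)⁻¹ = -(Efun Yf Δ) := by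
    simp [Efun]
  have ht1 : frobNorm (Δ.toBlocks₁₂ * gfun Yf Δ) ≤ frobNorm Δ * frobNorm (gfun Yf Δ) :=
    le_trans (frobNorm_mul_le _ _)
      (mul_le_mul_of_nonneg_right (frob_toBlocks₁₂_le Δ) (frobNorm_nonneg _))
  have ht2 : frobNorm (Yf.toBlocks₁₂ * (((Yf.toBlocks₂₂ + Δ.toBlocks₂₂)⁻¹
        - (Yf.toBlocks₂₂)⁻¹) * Δ.toBlocks₂₁))
      ≤ frobNorm Yf.toBlocks₁₂ * (frobNorm (Efun Yf Δ) * frobNorm Δ) := by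
    refine le_trans (frobNorm_mul_le _ _) (mul_le_mul_of_nonneg_left ?_ (frobNorm_nonneg _))
    refine le_trans (frobNorm_mul_le _ _) ?_
    rw [hnegE, frobNorm_neg]
    exact mul_le_mul_of_nonneg_left (frob_toBlocks₂₁_le Δ) (frobNorm_nonneg _)
  have ht3 : frobNorm (Yf.toBlocks₁₂ * ((Yf.toBlocks₂₂)⁻¹
        * (Δ.toBlocks₂₂ * (Efun Yf Δ * Yf.toBlocks₂₁))))
      ≤ frobNorm Yf.toBlocks₁₂ * (frobNorm (Yf.toBlocks₂₂)⁻¹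
          * (frobNorm Δ * (frobNorm (Efun Yf Δ) * frobNorm Yf.toBlocks₂₁))) := by
    refine le_trans (frobNorm_mul_le _ _) (mul_le_mul_of_nonneg_left ?_ (frobNorm_nonneg _))
    refine le_trans (frobNorm_mul_le _ _) (mul_le_mul_of_nonneg_left ?_ (frobNorm_nonneg _))
    refine le_trans (frobNorm_mul_le _ _) ?_
    exact mul_le_mul (frob_toBlocks₂₂_le Δ) (frobNorm_mul_le _ _) (frobNorm_nonneg _)
      (frobNorm_nonneg _)
  calc frobNorm (-(Δ.toBlocks₁₂ * gfun Yf Δ)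
        - Yf.toBlocks₁₂ * (((Yf.toBlocks₂₂ + Δ.toBlocks₂₂)⁻¹ - (Yf.toBlocks₂₂)⁻¹)
            * Δ.toBlocks₂₁)
        - Yf.toBlocks₁₂ * ((Yf.toBlocks₂₂)⁻¹ * (Δ.toBlocks₂₂ * (Efun Yf Δ * Yf.toBlocks₂₁))))
      ≤ frobNorm (-(Δ.toBlocks₁₂ * gfun Yf Δ)
          - Yf.toBlocks₁₂ * (((Yf.toBlocks₂₂ + Δ.toBlocks₂₂)⁻¹ - (Yf.toBlocks₂₂)⁻¹)
              * Δ.toBlocks₂₁))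
        + frobNorm (Yf.toBlocks₁₂ * ((Yf.toBlocks₂₂)⁻¹
            * (Δ.toBlocks₂₂ * (Efun Yf Δ * Yf.toBlocks₂₁)))) := frobNorm_sub_le _ _
    _ ≤ (frobNorm (-(Δ.toBlocks₁₂ * gfun Yf Δ))
          + frobNorm (Yf.toBlocks₁₂ * (((Yf.toBlocks₂₂ + Δ.toBlocks₂₂)⁻¹ - (Yf.toBlocks₂₂)⁻¹)
              * Δ.toBlocks₂₁)))
        + frobNorm (Yf.toBlocks₁₂ * ((Yf.toBlocks₂₂)⁻¹
            * (Δ.toBlocks₂₂ * (Efun Yf Δ * Yf.toBlocks₂₁)))) :=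
        add_le_add_left (frobNorm_sub_le _ _) _
    _ ≤ (frobNorm Δ * frobNorm (gfun Yf Δ)
          + frobNorm Yf.toBlocks₁₂ * (frobNorm (Efun Yf Δ) * frobNorm Δ))
        + frobNorm Yf.toBlocks₁₂ * (frobNorm (Yf.toBlocks₂₂)⁻¹
            * (frobNorm Δ * (frobNorm (Efun Yf Δ) * frobNorm Yf.toBlocks₂₁))) := by
        refine add_le_add (add_le_add ?_ ht2) ht3
        rw [frobNorm_neg]
        exact ht1
    _ = frobNorm Δ * epsfun Yf Δ := by unfold epsfun; ring

lemma rem_littleO (hD : IsUnit (Yf.toBlocks₂₂).det) :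
    (fun Δ : Matrix (Fin p ⊕ Fin q) (Fin p ⊕ Fin q) ℂ =>
        frobNorm (schurC (Yf + Δ) - schurC Yf - Lfun Yf Δ))
      =o[nhds 0] (fun Δ => frobNorm Δ) := by
  have hO : (fun Δ : Matrix (Fin p ⊕ Fin q) (Fin p ⊕ Fin q) ℂ =>
      frobNorm Δ * epsfun Yf Δ) =o[nhds 0] (fun Δ => frobNorm Δ) := by
    have h1 : (fun Δ : Matrix (Fin p ⊕ Fin q) (Fin p ⊕ Fin q) ℂ => epsfun Yf Δ)
        =o[nhds 0] (fun _ => (1 : ℝ)) :=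
      (Asymptotics.isLittleO_one_iff ℝ).mpr (eps_tendsto Yf hD)
    have h2 := (Asymptotics.isBigO_refl
      (fun Δ : Matrix (Fin p ⊕ Fin q) (Fin p ⊕ Fin q) ℂ => frobNorm Δ)
      (nhds 0)).mul_isLittleO h1
    simpa using h2
  refine Asymptotics.IsBigO.trans_isLittleO ?_ hO
  rw [Asymptotics.isBigO_iff]
  refine ⟨1, ?_⟩
  filter_upwards [rem_bound Yf hD] with Δ h
  rw [Real.norm_eq_abs, Real.norm_eq_abs, one_mul, abs_of_nonneg (frobNorm_nonneg _)]
  exact h.trans (le_abs_self _)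

lemma L_bound (Δ : Matrix (Fin p ⊕ Fin q) (Fin p ⊕ Fin q) ℂ) :
    frobNorm (Lfun Yf Δ)
      ≤ (1 + opNormRect Yf.toBlocks₁₂ * opNormRect (Yf.toBlocks₂₂)⁻¹)
          * (1 + opNormRect (Yf.toBlocks₂₂)⁻¹ * opNormRect Yf.toBlocks₂₁) * frobNorm Δ := by
  have h1 : frobNorm Δ.toBlocks₁₁ ≤ frobNorm Δ := frob_toBlocks₁₁_le Δ
  have h2 : frobNorm (Δ.toBlocks₁₂ * ((Yf.toBlocks₂₂)⁻¹ * Yf.toBlocks₂₁))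
      ≤ frobNorm Δ * (opNormRect (Yf.toBlocks₂₂)⁻¹ * opNormRect Yf.toBlocks₂₁) :=
    le_trans (frobNorm_mul_op_le _ _)
      (mul_le_mul (frob_toBlocks₁₂_le Δ) (opNormRect_mul_le _ _)
        (opNormRect_nonneg' _) (frobNorm_nonneg _))
  have h3 : frobNorm (Yf.toBlocks₁₂ * ((Yf.toBlocks₂₂)⁻¹ * Δ.toBlocks₂₁))
      ≤ (opNormRect Yf.toBlocks₁₂ * opNormRect (Yf.toBlocks₂₂)⁻¹) * frobNorm Δ := by
    rw [← Matrix.mul_assoc]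
    exact le_trans (frobNorm_op_mul_le _ _)
      (mul_le_mul (opNormRect_mul_le _ _) (frob_toBlocks₂₁_le Δ) (frobNorm_nonneg _)
        (mul_nonneg (opNormRect_nonneg' _) (opNormRect_nonneg' _)))
  have h4 : frobNorm (Yf.toBlocks₁₂ * ((Yf.toBlocks₂₂)⁻¹
        * (Δ.toBlocks₂₂ * ((Yf.toBlocks₂₂)⁻¹ * Yf.toBlocks₂₁))))
      ≤ (opNormRect Yf.toBlocks₁₂ * opNormRect (Yf.toBlocks₂₂)⁻¹)
          * (frobNorm Δ * (opNormRect (Yf.toBlocks₂₂)⁻¹ * opNormRect Yf.toBlocks₂₁)) := by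
    rw [← Matrix.mul_assoc]
    refine le_trans (frobNorm_op_mul_le _ _) ?_
    refine mul_le_mul (opNormRect_mul_le _ _) ?_ (frobNorm_nonneg _)
      (mul_nonneg (opNormRect_nonneg' _) (opNormRect_nonneg' _))
    exact le_trans (frobNorm_mul_op_le _ _)
      (mul_le_mul (frob_toBlocks₂₂_le Δ) (opNormRect_mul_le _ _)
        (opNormRect_nonneg' _) (frobNorm_nonneg _))
  have hsum : frobNorm (Lfun Yf Δ)
      ≤ frobNorm Δ.toBlocks₁₁
        + frobNorm (Δ.toBlocks₁₂ * ((Yf.toBlocks₂₂)⁻¹ * Yf.toBlocks₂₁))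
        + frobNorm (Yf.toBlocks₁₂ * ((Yf.toBlocks₂₂)⁻¹ * Δ.toBlocks₂₁))
        + frobNorm (Yf.toBlocks₁₂ * ((Yf.toBlocks₂₂)⁻¹
            * (Δ.toBlocks₂₂ * ((Yf.toBlocks₂₂)⁻¹ * Yf.toBlocks₂₁)))) := by
    unfold Lfun
    refine le_trans (frobNorm_add_le _ _) (add_le_add ?_ le_rfl)
    refine le_trans (frobNorm_sub_le _ _) (add_le_add ?_ le_rfl)
    exact frobNorm_sub_le _ _
  calc frobNorm (Lfun Yf Δ)
      ≤ frobNorm Δ + frobNorm Δ * (opNormRect (Yf.toBlocks₂₂)⁻¹ * opNormRect Yf.toBlocks₂₁)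
        + (opNormRect Yf.toBlocks₁₂ * opNormRect (Yf.toBlocks₂₂)⁻¹) * frobNorm Δ
        + (opNormRect Yf.toBlocks₁₂ * opNormRect (Yf.toBlocks₂₂)⁻¹)
            * (frobNorm Δ * (opNormRect (Yf.toBlocks₂₂)⁻¹ * opNormRect Yf.toBlocks₂₁)) :=
      le_trans hsum (add_le_add (add_le_add (add_le_add h1 h2) h3) h4)
    _ = (1 + opNormRect Yf.toBlocks₁₂ * opNormRect (Yf.toBlocks₂₂)⁻¹)
          * (1 + opNormRect (Yf.toBlocks₂₂)⁻¹ * opNormRect Yf.toBlocks₂₁) * frobNorm Δ := by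
      ring

end MainAux

/-- First-order Kron (Schur-complement) perturbation bound: up to `o(‖Δ‖_F)`,
`‖K - K'‖_F ≤ (1 + ‖B‖‖D⁻¹‖)(1 + ‖D⁻¹‖‖C‖)‖Y_full - Y'_full‖_F`, and when
`‖B‖ = ‖C‖` the factor is `1 + 2‖B‖‖D⁻¹‖ + ‖B‖²‖D⁻¹‖²`. -/
theorem kron_perturbation {p q : ℕ}
    (Yf : Matrix (Fin p ⊕ Fin q) (Fin p ⊕ Fin q) ℂ)
    (hD : IsUnit (Yf.toBlocks₂₂).det) :
    (fun Δ : Matrix (Fin p ⊕ Fin q) (Fin p ⊕ Fin q) ℂ =>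
        max (frobNorm (schurC (Yf + Δ) - schurC Yf)
          - (1 + opNormRect Yf.toBlocks₁₂ * opNormRect (Yf.toBlocks₂₂)⁻¹)
            * (1 + opNormRect (Yf.toBlocks₂₂)⁻¹ * opNormRect Yf.toBlocks₂₁)
            * frobNorm Δ) 0)
      =o[nhds 0] (fun Δ => frobNorm Δ) ∧
    (opNormRect Yf.toBlocks₁₂ = opNormRect Yf.toBlocks₂₁ →
      (fun Δ : Matrix (Fin p ⊕ Fin q) (Fin p ⊕ Fin q) ℂ =>
          max (frobNorm (schurC (Yf + Δ) - schurC Yf)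
            - (1 + 2 * opNormRect Yf.toBlocks₁₂ * opNormRect (Yf.toBlocks₂₂)⁻¹
                + opNormRect Yf.toBlocks₁₂ ^ 2 * opNormRect (Yf.toBlocks₂₂)⁻¹ ^ 2)
              * frobNorm Δ) 0)
        =o[nhds 0] (fun Δ => frobNorm Δ)) := by
  have main : ∀ c : ℝ,
      (∀ Δ : Matrix (Fin p ⊕ Fin q) (Fin p ⊕ Fin q) ℂ,
        frobNorm (Lfun Yf Δ) ≤ c * frobNorm Δ) →
      (fun Δ : Matrix (Fin p ⊕ Fin q) (Fin p ⊕ Fin q) ℂ =>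
          max (frobNorm (schurC (Yf + Δ) - schurC Yf) - c * frobNorm Δ) 0)
        =o[nhds 0] (fun Δ => frobNorm Δ) := by
    intro c hc
    refine Asymptotics.IsBigO.trans_isLittleO ?_ (rem_littleO Yf hD)
    rw [Asymptotics.isBigO_iff]
    refine ⟨1, Filter.Eventually.of_forall fun Δ => ?_⟩
    rw [Real.norm_eq_abs, Real.norm_eq_abs, one_mul,
      abs_of_nonneg (le_max_right _ _), abs_of_nonneg (frobNorm_nonneg _)]
    refine max_le ?_ (frobNorm_nonneg _)
    have h := frobNorm_add_le (schurC (Yf + Δ) - schurC Yf - Lfun Yf Δ) (Lfun Yf Δ)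
    rw [sub_add_cancel] at h
    linarith [hc Δ]
  constructor
  · exact main _ (fun Δ => L_bound Yf Δ)
  · intro hBC
    refine main _ (fun Δ => ?_)
    have hc2 : (1 + 2 * opNormRect Yf.toBlocks₁₂ * opNormRect (Yf.toBlocks₂₂)⁻¹
          + opNormRect Yf.toBlocks₁₂ ^ 2 * opNormRect (Yf.toBlocks₂₂)⁻¹ ^ 2)
        = (1 + opNormRect Yf.toBlocks₁₂ * opNormRect (Yf.toBlocks₂₂)⁻¹)
          * (1 + opNormRect (Yf.toBlocks₂₂)⁻¹ * opNormRect Yf.toBlocks₂₁) := by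
      rw [← hBC]; ring
    rw [hc2]
    exact L_bound Yf Δ
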